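/- There exists a constant C such that for all r ≥ 1, e^{-r} · ∫_ℝ (e^{-2r} + t²)^{-1/2} · (1 + e^{-2r} t²)^{-1/2} dt ≤ C·(1 + r)·e^{-r}. -/

import Mathlib

open Real MeasureTheory Filter Topology

private lemma aux_integrable_comp_abs {f : ℝ → ℝ} (hf : IntegrableOn f (Set.Ioi 0)) :
    Integrable (fun x : ℝ => f |x|) := by
  have hf' : IntegrableOn (fun x : ℝ => f |x|) (Set.Ioi 0) :=
    hf.congr_fun (fun x hx => by rw [abs_of_pos hx]) measurableSet_Ioi
  have int_Iic : IntegrableOn (fun x : ℝ => f |x|) (Set.Iic 0) := by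
    rw [← Measure.map_neg_eq_self (volume : Measure ℝ)]
    have m : MeasurableEmbedding fun x : ℝ => -x := (Homeomorph.neg ℝ).measurableEmbedding
    rw [m.integrableOn_map_iff]
    simp_rw [Function.comp_def, abs_neg, Set.neg_preimage, Set.neg_Iic, neg_zero]
    exact (integrableOn_Ici_iff_integrableOn_Ioi).mpr hf'
  have h := int_Iic.union hf'
  rwa [Set.Iic_union_Ioi, integrableOn_univ] at h

private lemma aux_rpow_neg_half (x : ℝ) (hx : 0 ≤ x) :
    x ^ (-(1/2) : ℝ) = (Real.sqrt x)⁻¹ := by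
  rw [Real.rpow_neg hx, Real.sqrt_eq_rpow]

private lemma aux_pointwise (a b P Q u : ℝ) (ha : 0 < a) (hb : 0 < b) (hab : a * b = 1)
    (hu : 0 ≤ u) (hPpos : 0 < P) (hQpos : 0 < Q)
    (hP2 : P ^ 2 = b ^ 2 + u ^ 2) (hQ2 : Q ^ 2 = 1 + b ^ 2 * u ^ 2) :
    P⁻¹ * Q⁻¹ ≤ 2 * a * ((1 + a * u) * (1 + b * u))⁻¹ := by
  have hD1 : (0:ℝ) < 1 + a * u := by positivity
  have hD2 : (0:ℝ) < 1 + b * u := by positivity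
  have hs2 : (Real.sqrt 2) ^ 2 = 2 := Real.sq_sqrt (by norm_num)
  have hs0 : (0:ℝ) ≤ Real.sqrt 2 := Real.sqrt_nonneg 2
  have habsq : a ^ 2 * b ^ 2 = 1 := by nlinarith [hab]
  have h1 : 1 + a * u ≤ Real.sqrt 2 * (a * P) := by
    have hexp : (Real.sqrt 2 * (a * P)) ^ 2 = 2 * (a ^ 2 * (b ^ 2 + u ^ 2)) := by
      rw [mul_pow, mul_pow, hs2, hP2]
    have hsq : (1 + a * u) ^ 2 ≤ (Real.sqrt 2 * (a * P)) ^ 2 := by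
      rw [hexp]; nlinarith [sq_nonneg (a * u - 1), habsq]
    calc 1 + a * u = Real.sqrt ((1 + a * u) ^ 2) := (Real.sqrt_sq hD1.le).symm
      _ ≤ Real.sqrt ((Real.sqrt 2 * (a * P)) ^ 2) := Real.sqrt_le_sqrt hsq
      _ = Real.sqrt 2 * (a * P) := Real.sqrt_sq (by positivity)
  have h2 : 1 + b * u ≤ Real.sqrt 2 * Q := by
    have hexp : (Real.sqrt 2 * Q) ^ 2 = 2 * (1 + b ^ 2 * u ^ 2) := by
      rw [mul_pow, hs2, hQ2]
    have hsq : (1 + b * u) ^ 2 ≤ (Real.sqrt 2 * Q) ^ 2 := by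
      rw [hexp]; nlinarith [sq_nonneg (b * u - 1)]
    calc 1 + b * u = Real.sqrt ((1 + b * u) ^ 2) := (Real.sqrt_sq hD2.le).symm
      _ ≤ Real.sqrt ((Real.sqrt 2 * Q) ^ 2) := Real.sqrt_le_sqrt hsq
      _ = Real.sqrt 2 * Q := Real.sqrt_sq (by positivity)
  have hprod : (1 + a * u) * (1 + b * u) ≤ 2 * a * (P * Q) := by
    have hm := mul_le_mul h1 h2 hD2.le (by positivity)
    have h22 : Real.sqrt 2 * Real.sqrt 2 = 2 := Real.mul_self_sqrt (by norm_num)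
    have he : (Real.sqrt 2 * (a * P)) * (Real.sqrt 2 * Q) = 2 * a * (P * Q) := by
      calc (Real.sqrt 2 * (a * P)) * (Real.sqrt 2 * Q)
          = (Real.sqrt 2 * Real.sqrt 2) * (a * (P * Q)) := by ring
        _ = 2 * (a * (P * Q)) := by rw [h22]
        _ = 2 * a * (P * Q) := by ring
    exact hm.trans he.le
  have hPQ : 0 < P * Q := mul_pos hPpos hQpos
  have hD : 0 < (1 + a * u) * (1 + b * u) := mul_pos hD1 hD2
  rw [← mul_inv, ← one_div, show (2 * a * ((1 + a * u) * (1 + b * u))⁻¹ : ℝ)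
    = 2 * a / ((1 + a * u) * (1 + b * u)) from (div_eq_mul_inv _ _).symm,
    div_le_div_iff₀ hPQ hD]
  nlinarith [hprod]

theorem principal_series_uniform_integral_estimate :
    ∃ C : ℝ, ∀ r : ℝ, 1 ≤ r →
      Real.exp (-r) *
          ∫ t : ℝ, (Real.exp (-2 * r) + t ^ 2) ^ (-(1/2) : ℝ) *
            (1 + Real.exp (-2 * r) * t ^ 2) ^ (-(1/2) : ℝ)
        ≤ C * (1 + r) * Real.exp (-r) := by
  refine ⟨16, fun r hr => ?_⟩
  set a := Real.exp r with ha_def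
  set b := Real.exp (-r) with hb_def
  have ha : 0 < a := Real.exp_pos r
  have hb : 0 < b := Real.exp_pos (-r)
  have hab : a * b = 1 := by rw [ha_def, hb_def, ← Real.exp_add]; simp
  have hb2 : Real.exp (-2 * r) = b ^ 2 := by
    rw [hb_def, sq, ← Real.exp_add]; congr 1; ring
  have hba : b < a := Real.exp_lt_exp.mpr (by linarith)
  have ha2 : (2:ℝ) ≤ a := by
    have h1 : (2:ℝ) ≤ Real.exp 1 := by nlinarith [Real.add_one_le_exp (1:ℝ)]
    rw [ha_def]
    exact h1.trans (Real.exp_le_exp.mpr hr)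
  have hlogab : Real.log (a / b) = 2 * r := by
    rw [ha_def, hb_def, ← Real.exp_sub, Real.log_exp]; ring
  clear_value a b
  clear ha_def hb_def
  -- pointwise bound
  have key : ∀ t : ℝ, (Real.exp (-2 * r) + t ^ 2) ^ (-(1/2) : ℝ) *
      (1 + Real.exp (-2 * r) * t ^ 2) ^ (-(1/2) : ℝ)
      ≤ 2 * a * ((1 + a * |t|) * (1 + b * |t|))⁻¹ := by
    intro t
    rw [hb2]
    have hP : (0:ℝ) < b ^ 2 + t ^ 2 := by positivity
    have hQ : (0:ℝ) < 1 + b ^ 2 * t ^ 2 := by positivity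
    rw [aux_rpow_neg_half _ hP.le, aux_rpow_neg_half _ hQ.le]
    exact aux_pointwise a b _ _ |t| ha hb hab (abs_nonneg t)
      (Real.sqrt_pos.mpr hP) (Real.sqrt_pos.mpr hQ)
      (by rw [Real.sq_sqrt hP.le, sq_abs]) (by rw [Real.sq_sqrt hQ.le, sq_abs])
  -- derivative of the antiderivative
  have hderiv : ∀ s ∈ Set.Ici (0:ℝ),
      HasDerivAt (fun s => (Real.log (1 + a * s) - Real.log (1 + b * s)) / (a - b))
        (((1 + a * s) * (1 + b * s))⁻¹) s := by
    intro s hs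
    have hs0 : (0:ℝ) ≤ s := hs
    have h1 : (0:ℝ) < 1 + a * s := by positivity
    have h2 : (0:ℝ) < 1 + b * s := by positivity
    have hane : a - b ≠ 0 := sub_ne_zero.mpr hba.ne'
    have d1 : HasDerivAt (fun s : ℝ => 1 + a * s) a s := by
      simpa using ((hasDerivAt_id s).const_mul a).const_add 1
    have d2 : HasDerivAt (fun s : ℝ => 1 + b * s) b s := by
      simpa using ((hasDerivAt_id s).const_mul b).const_add 1
    have l1 := d1.log h1.ne'
    have l2 := d2.log h2.ne'
    have hd := (l1.sub l2).div_const (a - b)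
    rw [show ((1 + a * s) * (1 + b * s))⁻¹ = (a / (1 + a * s) - b / (1 + b * s)) / (a - b) by
      field_simp
      ring]
    exact hd
  -- tendsto at infinity
  have h0 : Tendsto (fun s : ℝ => 1 / s) atTop (𝓝 (0:ℝ)) := by
    simpa [one_div] using tendsto_inv_atTop_zero
  have hlim : Tendsto (fun s : ℝ => (1 / s + a) / (1 / s + b)) atTop (𝓝 (a / b)) := by
    have := (h0.add (tendsto_const_nhds (x := a))).div
      (h0.add (tendsto_const_nhds (x := b))) (by simpa using hb.ne')
    simpa only [zero_add, Pi.div_def] using this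
  have hlog : Tendsto (fun s : ℝ => Real.log (1 + a * s) - Real.log (1 + b * s)) atTop
      (𝓝 (2 * r)) := by
    have hcont : ContinuousAt Real.log (a / b) := Real.continuousAt_log (by positivity)
    have hc := hcont.tendsto.comp hlim
    rw [hlogab] at hc
    refine hc.congr' ?_
    filter_upwards [eventually_gt_atTop (0:ℝ)] with s hs
    have h1 : (0:ℝ) < 1 + a * s := by positivity
    have h2 : (0:ℝ) < 1 + b * s := by positivity
    have he : (1 / s + a) / (1 / s + b) = (1 + a * s) / (1 + b * s) := by
      field_simp
    simp only [Function.comp_apply, he, Real.log_div h1.ne' h2.ne']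
  have hG : Tendsto (fun s : ℝ => (Real.log (1 + a * s) - Real.log (1 + b * s)) / (a - b))
      atTop (𝓝 (2 * r / (a - b))) := hlog.div_const _
  have hpos' : ∀ s ∈ Set.Ioi (0:ℝ), (0:ℝ) ≤ ((1 + a * s) * (1 + b * s))⁻¹ := by
    intro s hs
    have hs0 : (0:ℝ) < s := hs
    have h1 : (0:ℝ) < 1 + a * s := by positivity
    have h2 : (0:ℝ) < 1 + b * s := by positivity
    positivity
  have hIone : ∫ s in Set.Ioi (0:ℝ), ((1 + a * s) * (1 + b * s))⁻¹ = 2 * r / (a - b) := by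
    have := integral_Ioi_of_hasDerivAt_of_nonneg' hderiv hpos' hG
    simpa using this
  have hIntOn : IntegrableOn (fun s : ℝ => ((1 + a * s) * (1 + b * s))⁻¹) (Set.Ioi 0) :=
    integrableOn_Ioi_deriv_of_nonneg' hderiv hpos' hG
  have hIntOn2 : IntegrableOn (fun s : ℝ => 2 * a * ((1 + a * s) * (1 + b * s))⁻¹)
      (Set.Ioi 0) := hIntOn.const_mul _
  have hg_int : Integrable (fun t : ℝ => 2 * a * ((1 + a * |t|) * (1 + b * |t|))⁻¹) :=
    aux_integrable_comp_abs hIntOn2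
  have hg_val : ∫ t : ℝ, 2 * a * ((1 + a * |t|) * (1 + b * |t|))⁻¹
      = 2 * (2 * a * (2 * r / (a - b))) := by
    rw [integral_comp_abs (f := fun s => 2 * a * ((1 + a * s) * (1 + b * s))⁻¹),
      integral_const_mul, hIone]
  have hIle : (∫ t : ℝ, (Real.exp (-2 * r) + t ^ 2) ^ (-(1/2) : ℝ) *
      (1 + Real.exp (-2 * r) * t ^ 2) ^ (-(1/2) : ℝ)) ≤ 16 * (1 + r) := by
    have hmono := integral_mono_of_nonneg (f := fun t : ℝ =>
        (Real.exp (-2 * r) + t ^ 2) ^ (-(1/2) : ℝ) *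
        (1 + Real.exp (-2 * r) * t ^ 2) ^ (-(1/2) : ℝ))
      (g := fun t : ℝ => 2 * a * ((1 + a * |t|) * (1 + b * |t|))⁻¹)
      (Filter.Eventually.of_forall fun t => by
        have h1 : (0:ℝ) < Real.exp (-2 * r) + t ^ 2 := by positivity
        have h2 : (0:ℝ) < 1 + Real.exp (-2 * r) * t ^ 2 := by positivity
        positivity)
      hg_int (Filter.Eventually.of_forall key)
    refine hmono.trans ?_
    rw [hg_val]
    have hd0 : (0:ℝ) < a - b := by linarith
    have hbhalf : b ≤ 1 / 2 := by nlinarith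
    have habhalf : a / 2 ≤ a - b := by nlinarith
    rw [show (2 * (2 * a * (2 * r / (a - b))) : ℝ) = 8 * a * r / (a - b) by ring,
      div_le_iff₀ hd0]
    nlinarith [mul_le_mul_of_nonneg_left habhalf (by nlinarith : (0:ℝ) ≤ 16 * (1 + r)),
      mul_nonneg ha.le (by linarith : (0:ℝ) ≤ r)]
  calc b * (∫ t : ℝ, (Real.exp (-2 * r) + t ^ 2) ^ (-(1/2) : ℝ) *
        (1 + Real.exp (-2 * r) * t ^ 2) ^ (-(1/2) : ℝ))
      ≤ b * (16 * (1 + r)) := mul_le_mul_of_nonneg_left hIle hb.le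
    _ = 16 * (1 + r) * b := by ring
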